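/- (Dual Cheeger upper bound) For a finite connected subset Ω of a weighted graph, λ_max(Ω) ≤ 1 + √(1 - (1 - h̄(Ω))²). -/

import Mathlib

open Finset

variable {V : Type*}

noncomputable def deg (μ : V → V → ℝ) (x : V) : ℝ := ∑ᶠ y, μ x y

noncomputable def eSum (μ : V → V → ℝ) (A B : Finset V) : ℝ :=
  ∑ x ∈ A, ∑ y ∈ B, μ x y

noncomputable def vol (μ : V → V → ℝ) (U : Finset V) : ℝ := ∑ x ∈ U, deg μ x

noncomputable def bdry (μ : V → V → ℝ) (U : Finset V) : ℝ := vol μ U - eSum μ U U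

noncomputable def cheeger (μ : V → V → ℝ) (Ω : Finset V) : ℝ :=
  sInf {r : ℝ | ∃ U : Finset V, U.Nonempty ∧ U ⊆ Ω ∧ r = bdry μ U / vol μ U}

noncomputable def dualCheeger (μ : V → V → ℝ) (Ω : Finset V) : ℝ :=
  sSup {r : ℝ | ∃ V₁ V₂ : Finset V, V₁.Nonempty ∧ V₂.Nonempty ∧ Disjoint V₁ V₂ ∧
    V₁ ⊆ Ω ∧ V₂ ⊆ Ω ∧ r = 2 * eSum μ V₁ V₂ / (vol μ V₁ + vol μ V₂)}

noncomputable def dLap (μ : V → V → ℝ) (Ω : Finset V) (f : V → ℝ) (x : V) : ℝ :=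
  f x - (1 / deg μ x) * ∑ y ∈ Ω, μ x y * f y

def IsDirEigfun (μ : V → V → ℝ) (Ω : Finset V) (lam : ℝ) (f : V → ℝ) : Prop :=
  (∃ x ∈ Ω, f x ≠ 0) ∧ (∀ x ∉ Ω, f x = 0) ∧ ∀ x ∈ Ω, dLap μ Ω f x = lam * f x

def IsDirEig (μ : V → V → ℝ) (Ω : Finset V) (lam : ℝ) : Prop :=
  ∃ f : V → ℝ, IsDirEigfun μ Ω lam f

noncomputable def lam1 (μ : V → V → ℝ) (Ω : Finset V) : ℝ :=
  sInf {l : ℝ | IsDirEig μ Ω l}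

noncomputable def lamMax (μ : V → V → ℝ) (Ω : Finset V) : ℝ :=
  sSup {l : ℝ | IsDirEig μ Ω l}

def ConnectedOn (μ : V → V → ℝ) (Ω : Finset V) : Prop :=
  ∀ x ∈ Ω, ∀ y ∈ Ω,
    Relation.ReflTransGen (fun a b => a ∈ Ω ∧ b ∈ Ω ∧ μ a b ≠ 0) x y

def BipartiteOn (μ : V → V → ℝ) (Ω : Finset V) : Prop :=
  ∃ U₁ U₂ : Finset V, Disjoint U₁ U₂ ∧ (U₁ : Set V) ∪ ↑U₂ = ↑Ω ∧
    (∀ x ∈ U₁, ∀ y ∈ U₁, μ x y = 0) ∧ (∀ x ∈ U₂, ∀ y ∈ U₂, μ x y = 0)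

section dualCheegerProofAux
open MeasureTheory
variable {V : Type*}

private lemma deg_eq_sum' {μ : V → V → ℝ} (hfin : ∀ x : V, (Function.support (μ x)).Finite)
    {x : V} {s : Finset V} (hs : (hfin x).toFinset ⊆ s) : deg μ x = ∑ y ∈ s, μ x y := by
  rw [deg, finsum_eq_sum (μ x) (hfin x)]
  refine Finset.sum_subset hs fun y _ hy => ?_
  by_contra h
  exact hy ((hfin x).mem_toFinset.2 h)

private lemma sum_mu_le_deg {μ : V → V → ℝ} (hnn : ∀ x y, 0 ≤ μ x y)
    (hfin : ∀ x : V, (Function.support (μ x)).Finite) (x : V) (B : Finset V) :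
    ∑ y ∈ B, μ x y ≤ deg μ x := by
  classical
  rw [deg_eq_sum' hfin (Finset.subset_union_left (s₂ := B))]
  exact Finset.sum_le_sum_of_subset_of_nonneg Finset.subset_union_right
    (fun y _ _ => hnn x y)

private lemma eSum_comm' {μ : V → V → ℝ} (hsymm : ∀ x y, μ x y = μ y x) (A B : Finset V) :
    eSum μ A B = eSum μ B A := by
  rw [eSum, Finset.sum_comm, eSum]
  exact Finset.sum_congr rfl fun y _ => Finset.sum_congr rfl fun x _ => hsymm x y

private lemma vol_pos' {μ : V → V → ℝ} (hdeg : ∀ x : V, 0 < deg μ x) {U : Finset V}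
    (hU : U.Nonempty) : 0 < vol μ U :=
  Finset.sum_pos (fun x _ => hdeg x) hU

private lemma vol_nonneg' {μ : V → V → ℝ} (hdeg : ∀ x : V, 0 < deg μ x) (U : Finset V) :
    0 ≤ vol μ U :=
  Finset.sum_nonneg (fun x _ => (hdeg x).le)

private lemma eSum_le_vol_left {μ : V → V → ℝ} (hnn : ∀ x y, 0 ≤ μ x y)
    (hfin : ∀ x : V, (Function.support (μ x)).Finite) (A B : Finset V) :
    eSum μ A B ≤ vol μ A :=
  Finset.sum_le_sum fun x _ => sum_mu_le_deg hnn hfin x B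

private noncomputable def chi (a t : ℝ) : ℝ := if t < a then 1 else 0

private lemma chi_eq_indicator (a : ℝ) : chi a = Set.indicator (Set.Iio a) (fun _ => (1:ℝ)) := by
  funext t
  simp [chi, Set.indicator_apply, Set.mem_Iio]

private lemma chi_integrable (a : ℝ) :
    Integrable (chi a) (volume.restrict (Set.Ioi (0:ℝ))) := by
  rw [chi_eq_indicator, integrable_indicator_iff measurableSet_Iio]
  refine integrableOn_const ?_
  rw [Measure.restrict_apply measurableSet_Iio, Set.Iio_inter_Ioi, Real.volume_Ioo]
  exact ENNReal.ofReal_ne_top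

private lemma chi_integral {a : ℝ} (ha : 0 ≤ a) :
    ∫ t in Set.Ioi (0:ℝ), chi a t = a := by
  rw [chi_eq_indicator, MeasureTheory.integral_indicator measurableSet_Iio,
    MeasureTheory.setIntegral_const, Measure.real, Measure.restrict_apply measurableSet_Iio,
    Set.Iio_inter_Ioi, Real.volume_Ioo, smul_eq_mul, mul_one,
    ENNReal.toReal_ofReal (by linarith)]
  simp

private lemma chi_nonneg (a t : ℝ) : 0 ≤ chi a t := by
  unfold chi; split_ifs <;> norm_num

private lemma dual_mem_le_one {μ : V → V → ℝ} (hsymm : ∀ x y, μ x y = μ y x)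
    (hnn : ∀ x y, 0 ≤ μ x y) (hfin : ∀ x : V, (Function.support (μ x)).Finite)
    (hdeg : ∀ x : V, 0 < deg μ x) (Ω : Finset V) :
    ∀ r ∈ {r : ℝ | ∃ V₁ V₂ : Finset V, V₁.Nonempty ∧ V₂.Nonempty ∧ Disjoint V₁ V₂ ∧
      V₁ ⊆ Ω ∧ V₂ ⊆ Ω ∧ r = 2 * eSum μ V₁ V₂ / (vol μ V₁ + vol μ V₂)}, r ≤ 1 := by
  rintro r ⟨A, B, hA, hB, -, -, -, rfl⟩
  have hvA : 0 < vol μ A := vol_pos' hdeg hA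
  have hvB : 0 < vol μ B := vol_pos' hdeg hB
  rw [div_le_one (by linarith)]
  have h1 : eSum μ A B ≤ vol μ A := eSum_le_vol_left hnn hfin A B
  have h2 : eSum μ A B ≤ vol μ B := by
    rw [eSum_comm' hsymm]; exact eSum_le_vol_left hnn hfin B A
  linarith

private lemma dualCheeger_le_one {μ : V → V → ℝ} (hsymm : ∀ x y, μ x y = μ y x)
    (hnn : ∀ x y, 0 ≤ μ x y) (hfin : ∀ x : V, (Function.support (μ x)).Finite)
    (hdeg : ∀ x : V, 0 < deg μ x) (Ω : Finset V) : dualCheeger μ Ω ≤ 1 :=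
  Real.sSup_le (dual_mem_le_one hsymm hnn hfin hdeg Ω) zero_le_one

private lemma le_dualCheeger {μ : V → V → ℝ} (hsymm : ∀ x y, μ x y = μ y x)
    (hnn : ∀ x y, 0 ≤ μ x y) (hfin : ∀ x : V, (Function.support (μ x)).Finite)
    (hdeg : ∀ x : V, 0 < deg μ x) (Ω : Finset V) {r : ℝ}
    (hr : r ∈ {r : ℝ | ∃ V₁ V₂ : Finset V, V₁.Nonempty ∧ V₂.Nonempty ∧ Disjoint V₁ V₂ ∧
      V₁ ⊆ Ω ∧ V₂ ⊆ Ω ∧ r = 2 * eSum μ V₁ V₂ / (vol μ V₁ + vol μ V₂)}) :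
    r ≤ dualCheeger μ Ω :=
  Real.le_sSup_iff ⟨1, fun s hs => dual_mem_le_one hsymm hnn hfin hdeg Ω s hs⟩
    ⟨r, hr⟩ |>.2 (fun ε hε => ⟨r, hr, by linarith⟩)

set_option maxHeartbeats 4000000 in
private lemma eig_le_bound {μ : V → V → ℝ} (hsymm : ∀ x y, μ x y = μ y x)
    (hnn : ∀ x y, 0 ≤ μ x y) (hfin : ∀ x : V, (Function.support (μ x)).Finite)
    (hdeg : ∀ x : V, 0 < deg μ x) (Ω : Finset V) {lam : ℝ} (hl : IsDirEig μ Ω lam) :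
    lam ≤ 1 + Real.sqrt (1 - (1 - dualCheeger μ Ω) ^ 2) := by
  classical
  rcases le_or_gt lam 1 with hlam | hlam
  · have := Real.sqrt_nonneg (1 - (1 - dualCheeger μ Ω) ^ 2); linarith
  obtain ⟨f, ⟨x0, hx0Ω, hx0⟩, hzero, heig⟩ := hl
  set u : V → ℝ := fun x => max (f x) 0 with hu
  set v : V → ℝ := fun x => max (-f x) 0 with hv
  have hu0 : ∀ x, 0 ≤ u x := fun x => le_max_right _ _
  have hv0 : ∀ x, 0 ≤ v x := fun x => le_max_right _ _
  have huv : ∀ x, f x = u x - v x := by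
    intro x; rcases le_total (f x) 0 with h | h
    · simp [hu, hv, max_eq_right h, max_eq_left (by linarith : (0:ℝ) ≤ -f x)]
    · simp [hu, hv, max_eq_left h, max_eq_right (by linarith : -f x ≤ (0:ℝ))]
  have huvmul : ∀ x, u x * v x = 0 := by
    intro x; rcases le_total (f x) 0 with h | h
    · simp [hu, max_eq_right h]
    · simp [hv, max_eq_right (by linarith : -f x ≤ (0:ℝ))]
  have huvsq : ∀ x, u x ^ 2 + v x ^ 2 = f x ^ 2 := by
    intro x; rcases le_total (f x) 0 with h | h
    · have h1 : u x = 0 := max_eq_right h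
      have h2 : v x = -f x := max_eq_left (by linarith)
      rw [h1, h2]; ring
    · have h1 : u x = f x := max_eq_left h
      have h2 : v x = 0 := max_eq_right (by linarith)
      rw [h1, h2]; ring
  have huΩ : ∀ x ∉ Ω, u x = 0 := fun x hx => by simp [hu, hzero x hx]
  have hvΩ : ∀ x ∉ Ω, v x = 0 := fun x hx => by simp [hv, hzero x hx]
  set D : ℝ := ∑ x ∈ Ω, deg μ x * f x ^ 2 with hD
  have hDpos : 0 < D := by
    refine Finset.sum_pos' (fun x _ => mul_nonneg (hdeg x).le (sq_nonneg _)) ⟨x0, hx0Ω, ?_⟩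
    have h2 : f x0 ^ 2 ≠ 0 := pow_ne_zero 2 hx0
    exact mul_pos (hdeg x0) (lt_of_le_of_ne (sq_nonneg _) (Ne.symm h2))
  set Ω' : Finset V := Ω ∪ Ω.biUnion (fun x => (hfin x).toFinset) with hΩ'
  have hsub : Ω ⊆ Ω' := Finset.subset_union_left
  have hdegΩ' : ∀ x ∈ Ω, deg μ x = ∑ y ∈ Ω', μ x y := by
    intro x hx
    refine deg_eq_sum' hfin (fun y hy => ?_)
    exact Finset.mem_union_right _ (Finset.mem_biUnion.2 ⟨x, hx, hy⟩)
  have hdegΩ'2 : ∀ y ∈ Ω, deg μ y = ∑ x ∈ Ω', μ x y := by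
    intro y hy
    rw [hdegΩ' y hy]
    exact Finset.sum_congr rfl fun x _ => hsymm y x
  have hS : ∀ x ∈ Ω, ∑ y ∈ Ω, μ x y * f y = (1 - lam) * (deg μ x * f x) := by
    intro x hx
    have h1 := heig x hx
    rw [dLap] at h1
    have hd := (hdeg x).ne'
    field_simp at h1
    linarith
  have hfsum : ∑ x ∈ Ω, ∑ y ∈ Ω, μ x y * (f x * f y) = (1 - lam) * D := by
    rw [hD, Finset.mul_sum]
    refine Finset.sum_congr rfl fun x hx => ?_
    have : ∑ y ∈ Ω, μ x y * (f x * f y) = f x * ∑ y ∈ Ω, μ x y * f y := by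
      rw [Finset.mul_sum]; exact Finset.sum_congr rfl fun y _ => by ring
    rw [this, hS x hx]; ring
  set A : ℝ := ∑ x ∈ Ω, ∑ y ∈ Ω, μ x y * (u x * u y + v x * v y) with hA
  set B : ℝ := ∑ x ∈ Ω, ∑ y ∈ Ω, μ x y * (u x * v y) with hB
  have hApos : 0 ≤ A := by
    refine Finset.sum_nonneg fun x _ => Finset.sum_nonneg fun y _ => ?_
    have := hu0 x; have := hu0 y; have := hv0 x; have := hv0 y
    have := hnn x y; positivity
  have hswap : ∑ x ∈ Ω, ∑ y ∈ Ω, μ x y * (v x * u y) = B := by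
    rw [hB, Finset.sum_comm]
    exact Finset.sum_congr rfl fun y _ => Finset.sum_congr rfl fun x _ => by
      rw [hsymm]; ring
  have hAB : A - 2 * B = (1 - lam) * D := by
    have h2 : ∑ x ∈ Ω, ∑ y ∈ Ω, μ x y * (f x * f y)
        = (∑ x ∈ Ω, ∑ y ∈ Ω, μ x y * (u x * u y + v x * v y))
          - (∑ x ∈ Ω, ∑ y ∈ Ω, μ x y * (u x * v y))
          - (∑ x ∈ Ω, ∑ y ∈ Ω, μ x y * (v x * u y)) := by
      simp only [← Finset.sum_sub_distrib]
      refine Finset.sum_congr rfl fun x _ => Finset.sum_congr rfl fun y _ => ?_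
      rw [huv x, huv y]; ring
    rw [← hfsum, h2, hswap, ← hA, ← hB]; ring
  have hS1 : ∑ x ∈ Ω', ∑ y ∈ Ω', μ x y * u x ^ 2 = ∑ x ∈ Ω, deg μ x * u x ^ 2 := by
    rw [← Finset.sum_subset hsub (fun x _ hx => by simp [huΩ x hx])]
    refine Finset.sum_congr rfl fun x hx => ?_
    rw [hdegΩ' x hx, Finset.sum_mul]
  have hS2 : ∑ x ∈ Ω', ∑ y ∈ Ω', μ x y * v y ^ 2 = ∑ y ∈ Ω, deg μ y * v y ^ 2 := by
    rw [Finset.sum_comm]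
    rw [← Finset.sum_subset hsub (fun y _ hy => by simp [hvΩ y hy])]
    refine Finset.sum_congr rfl fun y hy => ?_
    rw [hdegΩ'2 y hy, Finset.sum_mul]
  have hS12 : (∑ x ∈ Ω, deg μ x * u x ^ 2) + (∑ y ∈ Ω, deg μ y * v y ^ 2) = D := by
    rw [hD, ← Finset.sum_add_distrib]
    exact Finset.sum_congr rfl fun x _ => by rw [← huvsq x]; ring
  have hBshrink : ∑ x ∈ Ω', ∑ y ∈ Ω', μ x y * (u x * v y) = B := by
    rw [hB, ← Finset.sum_subset hsub (fun x _ hx => by simp [huΩ x hx])]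
    refine Finset.sum_congr rfl fun x hx => ?_
    exact (Finset.sum_subset hsub fun y _ hy => by simp [hvΩ y hy]).symm
  set K : ℝ := ∑ x ∈ Ω', ∑ y ∈ Ω', μ x y * (u x - v y) ^ 2 with hK
  set L : ℝ := ∑ x ∈ Ω', ∑ y ∈ Ω', μ x y * (u x + v y) ^ 2 with hL
  set C : ℝ := ∑ x ∈ Ω', ∑ y ∈ Ω', μ x y * |u x ^ 2 - v y ^ 2| with hC
  have hKexp : K = (∑ x ∈ Ω', ∑ y ∈ Ω', μ x y * u x ^ 2)
      + (∑ x ∈ Ω', ∑ y ∈ Ω', μ x y * v y ^ 2)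
      - 2 * (∑ x ∈ Ω', ∑ y ∈ Ω', μ x y * (u x * v y)) := by
    rw [hK]
    simp only [Finset.mul_sum, ← Finset.sum_add_distrib, ← Finset.sum_sub_distrib]
    exact Finset.sum_congr rfl fun x _ => Finset.sum_congr rfl fun y _ => by ring
  have hLexp : L = (∑ x ∈ Ω', ∑ y ∈ Ω', μ x y * u x ^ 2)
      + (∑ x ∈ Ω', ∑ y ∈ Ω', μ x y * v y ^ 2)
      + 2 * (∑ x ∈ Ω', ∑ y ∈ Ω', μ x y * (u x * v y)) := by
    rw [hL]
    simp only [Finset.mul_sum, ← Finset.sum_add_distrib]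
    exact Finset.sum_congr rfl fun x _ => Finset.sum_congr rfl fun y _ => by ring
  rw [hS1, hS2, hBshrink] at hKexp hLexp
  have hKval : K = (2 - lam) * D - A := by linear_combination hKexp + hS12 + hAB
  have hLval : L = lam * D + A := by linear_combination hLexp + hS12 - hAB
  have hK0 : 0 ≤ K := by
    refine Finset.sum_nonneg fun x _ => Finset.sum_nonneg fun y _ => ?_
    have := hnn x y; positivity
  have hlam2 : lam ≤ 2 := by nlinarith
  set c : ℝ := Real.sqrt (lam * (2 - lam)) with hc
  have hc0 : 0 ≤ c := Real.sqrt_nonneg _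
  have hc2 : c ^ 2 = lam * (2 - lam) := Real.sq_sqrt (by nlinarith)
  have hc1 : c ≤ 1 := by nlinarith
  have hKL : K * L ≤ (c * D) ^ 2 := by
    rw [hKval, hLval]
    have key : 0 ≤ (lam - 1) * (A * D) :=
      mul_nonneg (by linarith) (mul_nonneg hApos hDpos.le)
    have hcD : (c * D) ^ 2 = lam * (2 - lam) * D ^ 2 := by rw [mul_pow, hc2]
    rw [hcD]
    nlinarith [key, sq_nonneg A]
  have hCS : C ^ 2 ≤ K * L := by
    have key := Finset.sum_mul_sq_le_sq_mul_sq (Ω' ×ˢ Ω')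
      (fun p => Real.sqrt (μ p.1 p.2) * |u p.1 - v p.2|)
      (fun p => Real.sqrt (μ p.1 p.2) * (u p.1 + v p.2))
    have e1 : ∑ p ∈ Ω' ×ˢ Ω', (Real.sqrt (μ p.1 p.2) * |u p.1 - v p.2|)
        * (Real.sqrt (μ p.1 p.2) * (u p.1 + v p.2)) = C := by
      rw [hC, Finset.sum_product]
      refine Finset.sum_congr rfl fun x _ => Finset.sum_congr rfl fun y _ => ?_
      have hμ : Real.sqrt (μ x y) * Real.sqrt (μ x y) = μ x y :=
        Real.mul_self_sqrt (hnn x y)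
      rw [show u x ^ 2 - v y ^ 2 = (u x - v y) * (u x + v y) by ring, abs_mul,
        abs_of_nonneg (add_nonneg (hu0 x) (hv0 y)), mul_mul_mul_comm, hμ]
    have e2 : ∑ p ∈ Ω' ×ˢ Ω', (Real.sqrt (μ p.1 p.2) * |u p.1 - v p.2|) ^ 2 = K := by
      rw [hK, Finset.sum_product]
      refine Finset.sum_congr rfl fun x _ => Finset.sum_congr rfl fun y _ => ?_
      rw [mul_pow, Real.sq_sqrt (hnn x y), sq_abs]
    have e3 : ∑ p ∈ Ω' ×ˢ Ω', (Real.sqrt (μ p.1 p.2) * (u p.1 + v p.2)) ^ 2 = L := by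
      rw [hL, Finset.sum_product]
      refine Finset.sum_congr rfl fun x _ => Finset.sum_congr rfl fun y _ => ?_
      rw [mul_pow, Real.sq_sqrt (hnn x y)]
    rw [e1, e2, e3] at key
    exact key
  have hC0 : 0 ≤ C := by
    refine Finset.sum_nonneg fun x _ => Finset.sum_nonneg fun y _ => ?_
    have := hnn x y; positivity
  have hCcD : C ≤ c * D := by
    have h2 : C ^ 2 ≤ (c * D) ^ 2 := le_trans hCS hKL
    calc C = Real.sqrt (C ^ 2) := (Real.sqrt_sq hC0).symm
      _ ≤ Real.sqrt ((c * D) ^ 2) := Real.sqrt_le_sqrt h2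
      _ = c * D := Real.sqrt_sq (mul_nonneg hc0 hDpos.le)
  set E : ℝ := ∑ x ∈ Ω, ∑ y ∈ Ω, μ x y * min (u x ^ 2) (v y ^ 2) with hE
  have hEext : ∑ x ∈ Ω', ∑ y ∈ Ω', μ x y * min (u x ^ 2) (v y ^ 2) = E := by
    rw [hE, ← Finset.sum_subset hsub (fun x _ hx => Finset.sum_eq_zero fun y _ => by
      rw [huΩ x hx]
      have hm : min ((0:ℝ) ^ 2) (v y ^ 2) = 0 := by
        rw [show ((0:ℝ) ^ 2) = 0 by norm_num]; exact min_eq_left (sq_nonneg _)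
      rw [hm, mul_zero])]
    refine Finset.sum_congr rfl fun x hx => ?_
    refine (Finset.sum_subset hsub fun y _ hy => ?_).symm
    rw [hvΩ y hy]
    have hm : min (u x ^ 2) ((0:ℝ) ^ 2) = 0 := by
      rw [show ((0:ℝ) ^ 2) = 0 by norm_num]; exact min_eq_right (sq_nonneg _)
    rw [hm, mul_zero]
  have hCexp : C = (∑ x ∈ Ω', ∑ y ∈ Ω', μ x y * u x ^ 2)
      + (∑ x ∈ Ω', ∑ y ∈ Ω', μ x y * v y ^ 2)
      - 2 * (∑ x ∈ Ω', ∑ y ∈ Ω', μ x y * min (u x ^ 2) (v y ^ 2)) := by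
    rw [hC]
    simp only [Finset.mul_sum, ← Finset.sum_add_distrib, ← Finset.sum_sub_distrib]
    refine Finset.sum_congr rfl fun x _ => Finset.sum_congr rfl fun y _ => ?_
    rcases le_total (u x ^ 2) (v y ^ 2) with h | h
    · rw [min_eq_left h, abs_of_nonpos (by linarith)]; ring
    · rw [min_eq_right h, abs_of_nonneg (by linarith)]; ring
  rw [hS1, hS2, hEext] at hCexp
  have hEval : 2 * E = D - C := by linarith
  set φ : ℝ → ℝ := fun t =>
    (1 - c) * (∑ x ∈ Ω, deg μ x * (chi (u x ^ 2) t + chi (v x ^ 2) t))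
      - 2 * ∑ x ∈ Ω, ∑ y ∈ Ω, μ x y * chi (min (u x ^ 2) (v y ^ 2)) t with hφ
  have hint1 : ∀ x : V, Integrable (fun t => deg μ x * (chi (u x ^ 2) t + chi (v x ^ 2) t))
      (volume.restrict (Set.Ioi (0:ℝ))) := fun x =>
    (((chi_integrable _).add (chi_integrable _)).const_mul _)
  have hint2 : ∀ x y : V, Integrable (fun t => μ x y * chi (min (u x ^ 2) (v y ^ 2)) t)
      (volume.restrict (Set.Ioi (0:ℝ))) := fun x y => ((chi_integrable _).const_mul _)
  have hintS : Integrable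
      (fun t => ∑ x ∈ Ω, deg μ x * (chi (u x ^ 2) t + chi (v x ^ 2) t))
      (volume.restrict (Set.Ioi (0:ℝ))) := integrable_finset_sum _ (fun x _ => hint1 x)
  have hintT : Integrable
      (fun t => ∑ x ∈ Ω, ∑ y ∈ Ω, μ x y * chi (min (u x ^ 2) (v y ^ 2)) t)
      (volume.restrict (Set.Ioi (0:ℝ))) :=
    integrable_finset_sum _ (fun x _ => integrable_finset_sum _ (fun y _ => hint2 x y))
  have hφint : Integrable φ (volume.restrict (Set.Ioi (0:ℝ))) := by
    rw [hφ]
    exact (hintS.const_mul _).sub (hintT.const_mul _)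
  have hφval : ∫ t in Set.Ioi (0:ℝ), φ t = (1 - c) * D - 2 * E := by
    rw [hφ, integral_sub (hintS.const_mul _) (hintT.const_mul _),
      MeasureTheory.integral_const_mul, MeasureTheory.integral_const_mul,
      MeasureTheory.integral_finset_sum _ (fun x _ => hint1 x),
      MeasureTheory.integral_finset_sum _
        (fun x _ => integrable_finset_sum _ (fun y _ => hint2 x y))]
    have hs1 : ∑ x ∈ Ω, ∫ t in Set.Ioi (0:ℝ),
        deg μ x * (chi (u x ^ 2) t + chi (v x ^ 2) t) = D := by
      rw [hD]
      refine Finset.sum_congr rfl fun x _ => ?_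
      rw [MeasureTheory.integral_const_mul,
        integral_add (chi_integrable _) (chi_integrable _),
        chi_integral (sq_nonneg _), chi_integral (sq_nonneg _), huvsq x]
    have hs2 : ∑ x ∈ Ω, ∫ t in Set.Ioi (0:ℝ),
        (∑ y ∈ Ω, μ x y * chi (min (u x ^ 2) (v y ^ 2)) t) = E := by
      rw [hE]
      refine Finset.sum_congr rfl fun x _ => ?_
      rw [MeasureTheory.integral_finset_sum _ (fun y _ => hint2 x y)]
      refine Finset.sum_congr rfl fun y _ => ?_
      rw [MeasureTheory.integral_const_mul,
        chi_integral (le_min (sq_nonneg _) (sq_nonneg _))]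
    rw [hs1]
    rw [show (∑ x ∈ Ω, ∫ t in Set.Ioi (0:ℝ),
      (∑ y ∈ Ω, μ x y * chi (min (u x ^ 2) (v y ^ 2)) t)) = E from hs2]
  have hφeq : ∀ t : ℝ, φ t =
      (1 - c) * (vol μ (Ω.filter (fun x => t < u x ^ 2)) +
        vol μ (Ω.filter (fun x => t < v x ^ 2))) -
      2 * eSum μ (Ω.filter (fun x => t < u x ^ 2)) (Ω.filter (fun x => t < v x ^ 2)) := by
    intro t
    have h1 : vol μ (Ω.filter (fun x => t < u x ^ 2)) = ∑ x ∈ Ω, deg μ x * chi (u x ^ 2) t := by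
      rw [vol, Finset.sum_filter]
      refine Finset.sum_congr rfl fun x _ => ?_
      by_cases h : t < u x ^ 2 <;> simp [chi, h]
    have h2 : vol μ (Ω.filter (fun x => t < v x ^ 2)) = ∑ x ∈ Ω, deg μ x * chi (v x ^ 2) t := by
      rw [vol, Finset.sum_filter]
      refine Finset.sum_congr rfl fun x _ => ?_
      by_cases h : t < v x ^ 2 <;> simp [chi, h]
    have h3 : eSum μ (Ω.filter (fun x => t < u x ^ 2)) (Ω.filter (fun x => t < v x ^ 2))
        = ∑ x ∈ Ω, ∑ y ∈ Ω, μ x y * chi (min (u x ^ 2) (v y ^ 2)) t := by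
      rw [eSum, Finset.sum_filter]
      refine Finset.sum_congr rfl fun x _ => ?_
      rw [Finset.sum_filter]
      by_cases h : t < u x ^ 2
      · rw [if_pos h]
        refine Finset.sum_congr rfl fun y _ => ?_
        by_cases h' : t < v y ^ 2
        · rw [if_pos h']
          have : chi (min (u x ^ 2) (v y ^ 2)) t = 1 := by
            unfold chi; rw [if_pos (lt_min_iff.2 ⟨h, h'⟩)]
          rw [this, mul_one]
        · rw [if_neg h']
          have : chi (min (u x ^ 2) (v y ^ 2)) t = 0 := by
            unfold chi; rw [if_neg (fun hc => h' (lt_min_iff.1 hc).2)]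
          rw [this, mul_zero]
      · rw [if_neg h]
        refine (Finset.sum_eq_zero fun y _ => ?_).symm
        have : chi (min (u x ^ 2) (v y ^ 2)) t = 0 := by
          unfold chi; rw [if_neg (fun hc => h (lt_min_iff.1 hc).1)]
        rw [this, mul_zero]
    have hsplit : ∑ x ∈ Ω, deg μ x * (chi (u x ^ 2) t + chi (v x ^ 2) t)
        = (∑ x ∈ Ω, deg μ x * chi (u x ^ 2) t) + ∑ x ∈ Ω, deg μ x * chi (v x ^ 2) t := by
      rw [← Finset.sum_add_distrib]
      exact Finset.sum_congr rfl fun x _ => mul_add _ _ _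
    simp only [hφ]
    rw [h1, h2, h3, hsplit]
  have hEx : ∃ t : ℝ, 0 < t ∧
      ((Ω.filter (fun x => t < u x ^ 2)) ∪ (Ω.filter (fun x => t < v x ^ 2))).Nonempty ∧
      φ t ≤ 0 := by
    by_contra hcon
    push_neg at hcon
    have hnonneg : ∀ t ∈ Set.Ioi (0:ℝ), 0 ≤ φ t := by
      intro t ht
      rcases Finset.eq_empty_or_nonempty
          ((Ω.filter (fun x => t < u x ^ 2)) ∪ (Ω.filter (fun x => t < v x ^ 2))) with he | hne
      · have e1 : Ω.filter (fun x => t < u x ^ 2) = ∅ := (Finset.union_eq_empty.1 he).1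
        have e2 : Ω.filter (fun x => t < v x ^ 2) = ∅ := (Finset.union_eq_empty.1 he).2
        rw [hφeq t, e1, e2]
        simp [vol, eSum]
      · exact (hcon t ht hne).le
    have hint0 : 0 ≤ ∫ t in Set.Ioi (0:ℝ), φ t :=
      MeasureTheory.setIntegral_nonneg measurableSet_Ioi hnonneg
    have hintle : ∫ t in Set.Ioi (0:ℝ), φ t ≤ 0 := by
      rw [hφval]
      linarith only [hCcD, hEval]
    have hint_eq : ∫ t in Set.Ioi (0:ℝ), φ t = 0 := le_antisymm hintle hint0
    have hae : φ =ᵐ[volume.restrict (Set.Ioi (0:ℝ))] 0 :=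
      (MeasureTheory.integral_eq_zero_iff_of_nonneg_ae
        ((ae_restrict_iff' measurableSet_Ioi).2 (Filter.Eventually.of_forall hnonneg))
        hφint).1 hint_eq
    have hae2 : ∀ᵐ t ∂(volume : Measure ℝ), t ∈ Set.Ioi (0:ℝ) → φ t = 0 :=
      (ae_restrict_iff' measurableSet_Ioi).1 hae
    rw [Filter.eventually_iff, mem_ae_iff] at hae2
    have hM : 0 < f x0 ^ 2 :=
      lt_of_le_of_ne (sq_nonneg _) (Ne.symm (pow_ne_zero 2 hx0))
    have hsubset : Set.Ioo (0:ℝ) (f x0 ^ 2) ⊆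
        {t : ℝ | t ∈ Set.Ioi (0:ℝ) → φ t = 0}ᶜ := by
      intro t ht
      simp only [Set.mem_compl_iff, Set.mem_setOf_eq, not_forall]
      refine ⟨Set.mem_Ioi.2 ht.1, ?_⟩
      have hx0mem : x0 ∈ (Ω.filter (fun x => t < u x ^ 2)) ∪ (Ω.filter (fun x => t < v x ^ 2)) := by
        rcases hx0.lt_or_gt with hneg | hpos
        · refine Finset.mem_union_right _ (Finset.mem_filter.2 ⟨hx0Ω, ?_⟩)
          have : v x0 = -f x0 := max_eq_left (by linarith)
          rw [this]
          calc t < f x0 ^ 2 := ht.2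
            _ = (-f x0) ^ 2 := by ring
        · refine Finset.mem_union_left _ (Finset.mem_filter.2 ⟨hx0Ω, ?_⟩)
          have : u x0 = f x0 := max_eq_left (by linarith)
          rw [this]; exact ht.2
      exact (hcon t ht.1 ⟨x0, hx0mem⟩).ne'
    have h0 := measure_mono_null hsubset hae2
    rw [Real.volume_Ioo] at h0
    have := ENNReal.ofReal_eq_zero.1 h0
    linarith only [hM, this]
  obtain ⟨t, ht0, htne, htle⟩ := hEx
  set W₁ := Ω.filter (fun x => t < u x ^ 2) with hW₁
  set W₂ := Ω.filter (fun x => t < v x ^ 2) with hW₂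
  have hkey : (1 - c) * (vol μ W₁ + vol μ W₂) ≤ 2 * eSum μ W₁ W₂ := by
    have := hφeq t
    rw [← hW₁, ← hW₂] at this
    rw [this] at htle
    linarith only [htle]
  have hdisj : Disjoint W₁ W₂ := by
    rw [Finset.disjoint_left]
    intro a ha hb
    have h1 : t < u a ^ 2 := (Finset.mem_filter.1 ha).2
    have h2 : t < v a ^ 2 := (Finset.mem_filter.1 hb).2
    have hu' : u a ≠ 0 := by
      intro h; rw [h] at h1; norm_num at h1; linarith only [ht0, h1]
    have hv' : v a ≠ 0 := by
      intro h; rw [h] at h2; norm_num at h2; linarith only [ht0, h2]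
    exact (mul_ne_zero hu' hv') (huvmul a)
  have hne12 : W₁.Nonempty ∧ W₂.Nonempty := by
    rcases Finset.eq_empty_or_nonempty W₁ with h1 | h1
    · exfalso
      have he : eSum μ W₁ W₂ = 0 := by rw [h1]; simp [eSum]
      have hv1 : vol μ W₁ = 0 := by rw [h1]; simp [vol]
      have hW2ne : W₂.Nonempty := by
        rcases htne with ⟨z, hz⟩
        rcases Finset.mem_union.1 hz with hz1 | hz2
        · rw [h1] at hz1; exact absurd hz1 (Finset.notMem_empty z)
        · exact ⟨z, hz2⟩
      have hv2 : 0 < vol μ W₂ := vol_pos' hdeg hW2ne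
      have h1c : 1 - c ≤ 0 := by
        have h' := hkey
        rw [hv1, he, zero_add, mul_zero] at h'
        exact le_of_mul_le_mul_right (by rwa [zero_mul]) hv2
      have hcge : (1:ℝ) ≤ c := by linarith only [h1c]
      have hcc : 1 * 1 ≤ c * c := mul_le_mul hcge hcge zero_le_one (by linarith only [hcge])
      have hsq : 0 < (lam - 1) ^ 2 := pow_pos (by linarith only [hlam]) 2
      have hid : lam * (2 - lam) = 1 - (lam - 1) ^ 2 := by ring
      have hcc2 : c * c = c ^ 2 := (sq c).symm
      linarith only [hcc, hcc2, hc2, hid, hsq]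
    rcases Finset.eq_empty_or_nonempty W₂ with h2 | h2
    · exfalso
      have he : eSum μ W₁ W₂ = 0 := by rw [h2]; simp [eSum]
      have hv2 : vol μ W₂ = 0 := by rw [h2]; simp [vol]
      have hv1 : 0 < vol μ W₁ := vol_pos' hdeg h1
      have h1c : 1 - c ≤ 0 := by
        have h' := hkey
        rw [hv2, he, add_zero, mul_zero] at h'
        exact le_of_mul_le_mul_right (by rwa [zero_mul]) hv1
      have hcge : (1:ℝ) ≤ c := by linarith only [h1c]
      have hcc : 1 * 1 ≤ c * c := mul_le_mul hcge hcge zero_le_one (by linarith only [hcge])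
      have hsq : 0 < (lam - 1) ^ 2 := pow_pos (by linarith only [hlam]) 2
      have hid : lam * (2 - lam) = 1 - (lam - 1) ^ 2 := by ring
      have hcc2 : c * c = c ^ 2 := (sq c).symm
      linarith only [hcc, hcc2, hc2, hid, hsq]
    exact ⟨h1, h2⟩
  have hvpos : 0 < vol μ W₁ + vol μ W₂ :=
    add_pos (vol_pos' hdeg hne12.1) (vol_pos' hdeg hne12.2)
  have hrge : 1 - c ≤ 2 * eSum μ W₁ W₂ / (vol μ W₁ + vol μ W₂) :=
    (le_div_iff₀ hvpos).2 (by linarith only [hkey])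
  have hmem : (2 * eSum μ W₁ W₂ / (vol μ W₁ + vol μ W₂)) ∈
      {r : ℝ | ∃ V₁ V₂ : Finset V, V₁.Nonempty ∧ V₂.Nonempty ∧ Disjoint V₁ V₂ ∧
        V₁ ⊆ Ω ∧ V₂ ⊆ Ω ∧ r = 2 * eSum μ V₁ V₂ / (vol μ V₁ + vol μ V₂)} :=
    ⟨W₁, W₂, hne12.1, hne12.2, hdisj, Finset.filter_subset _ _, Finset.filter_subset _ _, rfl⟩
  have hdc := le_dualCheeger hsymm hnn hfin hdeg Ω hmem
  have hdc1 := dualCheeger_le_one hsymm hnn hfin hdeg Ω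
  have h8 : 1 - dualCheeger μ Ω ≤ c := by linarith only [le_trans hrge hdc]
  have h9 : 0 ≤ 1 - dualCheeger μ Ω := by linarith only [hdc1]
  have h6 : (1 - dualCheeger μ Ω) ^ 2 ≤ lam * (2 - lam) := by
    rw [← hc2]
    exact pow_le_pow_left₀ h9 h8 2
  have hid : lam * (2 - lam) = 1 - (lam - 1) ^ 2 := by ring
  have h7 : (lam - 1) ^ 2 ≤ 1 - (1 - dualCheeger μ Ω) ^ 2 := by
    linarith only [h6, hid]
  calc lam = 1 + (lam - 1) := by ring
    _ ≤ 1 + Real.sqrt ((lam - 1) ^ 2) := by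
        rw [Real.sqrt_sq (by linarith : (0:ℝ) ≤ lam - 1)]
    _ ≤ 1 + Real.sqrt (1 - (1 - dualCheeger μ Ω) ^ 2) :=
        add_le_add_right (Real.sqrt_le_sqrt h7) 1

end dualCheegerProofAux

theorem stmt11 {V : Type*} [Infinite V] (μ : V → V → ℝ) (hsymm : ∀ x y, μ x y = μ y x) (hnn : ∀ x y, 0 ≤ μ x y)
    (hfin : ∀ x : V, (Function.support (μ x)).Finite) (hdeg : ∀ x : V, 0 < deg μ x)
    (hconnG : ∀ x y : V, Relation.ReflTransGen (fun a b => μ a b ≠ 0) x y)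
    (Ω : Finset V) (hconn : ConnectedOn μ Ω) (hcard : 2 ≤ Ω.card) :
    lamMax μ Ω ≤ 1 + Real.sqrt (1 - (1 - dualCheeger μ Ω) ^ 2) := by
  refine Real.sSup_le (fun l hl => eig_le_bound hsymm hnn hfin hdeg Ω hl) ?_
  positivity
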